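/- Let f : ℂ → ℂ be continuous on the closed lower half-plane {z : Im z ≤ 0} and complex-differentiable on the open lower half-plane {z : Im z < 0}. If f(t) = 0 for every real t > 0 (i.e., f vanishes on the positive real axis), then f(z) = 0 for every z with Im z ≤ 0; in particular f(t) = 0 for every real t. -/

import Mathlib

open Complex Set Filter intervalIntegral

lemma hasDerivAt_conj_conj {f : ℂ → ℂ} {w d : ℂ}
    (hf : HasDerivAt f d ((starRingEnd ℂ) w)) :
    HasDerivAt (fun z => (starRingEnd ℂ) (f ((starRingEnd ℂ) z))) ((starRingEnd ℂ) d) w := by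
  rw [hasDerivAt_iff_tendsto_slope] at hf ⊢
  have h1 : Tendsto (fun z => (starRingEnd ℂ) z) (nhdsWithin w {w}ᶜ)
      (nhdsWithin ((starRingEnd ℂ) w) {(starRingEnd ℂ) w}ᶜ) := by
    apply Filter.Tendsto.inf (Complex.continuous_conj.tendsto w)
    exact tendsto_principal_principal.2 fun z hz => fun h => hz ((starRingEnd ℂ).injective h)
  have h2 := hf.comp h1
  have h3 := (Complex.continuous_conj.tendsto d).comp h2
  refine h3.congr fun z => ?_
  simp only [Function.comp_apply, slope_def_field, ← map_sub, map_div₀, Complex.conj_conj]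

lemma diffAt_conj_conj {f : ℂ → ℂ} {w : ℂ} (hf : DifferentiableAt ℂ f ((starRingEnd ℂ) w)) :
    DifferentiableAt ℂ (fun z => (starRingEnd ℂ) (f ((starRingEnd ℂ) z))) w :=
  (hasDerivAt_conj_conj hf.hasDerivAt).differentiableAt

lemma rect_zero {H : ℂ → ℂ} (hcont : Continuous H)
    (hdiff : ∀ z : ℂ, z.im ≠ 0 → DifferentiableAt ℂ H z) (a b c d : ℝ) :
    (∫ x : ℝ in a..b, H (x + c*I)) - (∫ x : ℝ in a..b, H (x + d*I)) +
      I • (∫ y : ℝ in c..d, H (b + y*I)) - I • (∫ y : ℝ in c..d, H (a + y*I)) = 0 := by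
  have base : ∀ c d : ℝ, Ioo (c ⊓ d) (c ⊔ d) ⊆ {y : ℝ | y ≠ 0} →
      (∫ x : ℝ in a..b, H (x + c*I)) - (∫ x : ℝ in a..b, H (x + d*I)) +
      I • (∫ y : ℝ in c..d, H (b + y*I)) - I • (∫ y : ℝ in c..d, H (a + y*I)) = 0 := by
    intro c d hcd
    have := Complex.integral_boundary_rect_eq_zero_of_continuousOn_of_differentiableOn H
      ((a : ℂ) + (c : ℝ)*I) ((b : ℂ) + (d : ℝ)*I) hcont.continuousOn ?_
    · simpa using this
    · intro z hz
      refine (hdiff z ?_).differentiableWithinAt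
      have h2 := (mem_reProdIm.1 hz).2
      simp only [Complex.add_im, Complex.ofReal_im, Complex.mul_im, Complex.I_im,
        Complex.ofReal_re, Complex.I_re, Complex.add_re, Complex.mul_re] at h2
      exact hcd (by simpa using h2)
  have ib : ∀ (x : ℝ) (u v : ℝ), IntervalIntegrable (fun y : ℝ => H (x + y*I)) MeasureTheory.volume u v :=
    fun x u v => (hcont.comp (by continuity)).intervalIntegrable u v
  have hzero : ∀ e : ℝ, Ioo (e ⊓ 0) (e ⊔ 0) ⊆ {y : ℝ | y ≠ 0} := by
    intro e y hy hy0
    subst hy0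
    rcases hy with ⟨h1, h2⟩
    simp only [lt_inf_iff, inf_lt_iff, lt_sup_iff, sup_lt_iff] at h1 h2
    rcases h1 with h1 | h1 <;> rcases h2 with h2 | h2 <;> linarith
  have hzero' : ∀ e : ℝ, Ioo ((0:ℝ) ⊓ e) ((0:ℝ) ⊔ e) ⊆ {y : ℝ | y ≠ 0} := by
    intro e; rw [inf_comm, sup_comm]; exact hzero e
  have h1 := base c 0 (hzero c)
  have h2 := base 0 d (hzero' d)
  have hb := intervalIntegral.integral_add_adjacent_intervals (ib b c 0) (ib b 0 d)
  have ha := intervalIntegral.integral_add_adjacent_intervals (ib a c 0) (ib a 0 d)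
  rw [← hb, ← ha]
  simp only [smul_add]
  linear_combination h1 + h2

lemma entire_of_diff_off_real {H : ℂ → ℂ} (hcont : Continuous H)
    (hdiff : ∀ z : ℂ, z.im ≠ 0 → DifferentiableAt ℂ H z) :
    Differentiable ℂ H := by
  have ibV : ∀ (x : ℝ) (u v : ℝ), IntervalIntegrable (fun y : ℝ => H (x + y*I))
      MeasureTheory.volume u v :=
    fun x u v => (hcont.comp (by continuity)).intervalIntegrable u v
  have ibH : ∀ (y : ℝ) (u v : ℝ), IntervalIntegrable (fun t : ℝ => H (t + y*I))
      MeasureTheory.volume u v :=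
    fun y u v => (hcont.comp (by continuity)).intervalIntegrable u v
  set G : ℂ → ℂ := fun z =>
    (∫ t : ℝ in (0:ℝ)..z.re, H (t + (0:ℝ)*I)) + I • ∫ s : ℝ in (0:ℝ)..z.im, H (z.re + s*I)
    with hGdef
  have key : ∀ z w : ℂ, G w - G z =
      (∫ t : ℝ in z.re..w.re, H (t + (z.im:ℝ)*I)) + I • ∫ s : ℝ in z.im..w.im, H (w.re + s*I) := by
    intro z w
    have hx := intervalIntegral.integral_add_adjacent_intervals (ibH 0 0 z.re) (ibH 0 z.re w.re)
    have hR := rect_zero hcont hdiff z.re w.re 0 z.im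
    have hs := intervalIntegral.integral_add_adjacent_intervals (ibV w.re 0 z.im) (ibV w.re z.im w.im)
    simp only [hGdef, smul_eq_mul] at hR hs ⊢
    linear_combination -hx + hR - I*hs
  have hG : ∀ z : ℂ, HasDerivAt G (H z) z := by
    intro z
    rw [hasDerivAt_iff_isLittleO, Asymptotics.isLittleO_iff]
    intro c hc
    obtain ⟨δ, hδpos, hδ⟩ := Metric.continuousAt_iff.1 hcont.continuousAt (c/2) (half_pos hc)
    filter_upwards [Metric.ball_mem_nhds z (half_pos hδpos)] with w hw
    rw [Metric.mem_ball] at hw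
    have hwd : ‖w - z‖ < δ/2 := by rwa [Complex.dist_eq] at hw
    have hre : |w.re - z.re| ≤ ‖w - z‖ := by
      simpa [Complex.sub_re] using Complex.abs_re_le_norm (w - z)
    have him : |w.im - z.im| ≤ ‖w - z‖ := by
      simpa [Complex.sub_im] using Complex.abs_im_le_norm (w - z)
    have hwz : w - z = ((w.re - z.re : ℝ) : ℂ) + ((w.im - z.im : ℝ) : ℂ) * I := by
      simp [Complex.ext_iff]
    have hE : G w - G z - (w - z) • H z =
        (∫ t : ℝ in z.re..w.re, (H (t + (z.im:ℝ)*I) - H z)) +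
          I • ∫ s : ℝ in z.im..w.im, (H (w.re + s*I) - H z) := by
      rw [key z w,
        intervalIntegral.integral_sub (ibH z.im z.re w.re) (intervalIntegrable_const),
        intervalIntegral.integral_sub (ibV w.re z.im w.im) (intervalIntegrable_const),
        intervalIntegral.integral_const, intervalIntegral.integral_const]
      simp only [smul_eq_mul, Complex.real_smul]
      rw [hwz]
      push_cast
      ring
    rw [hE]
    have h1 : ‖∫ t : ℝ in z.re..w.re, (H (t + (z.im:ℝ)*I) - H z)‖ ≤ (c/2) * |w.re - z.re| := by
      apply intervalIntegral.norm_integral_le_of_norm_le_const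
      intro t ht
      have htb : |t - z.re| ≤ |w.re - z.re| := by
        rcases Set.mem_uIoc.1 ht with ⟨h1, h2⟩ | ⟨h1, h2⟩ <;>
          · rw [abs_le]
            constructor <;> cases abs_cases (w.re - z.re) <;> linarith [abs_nonneg (w.re - z.re)]
      have hdist : dist ((t:ℂ) + (z.im:ℝ)*I) z < δ := by
        rw [Complex.dist_eq]
        have : ((t:ℂ) + (z.im:ℝ)*I) - z = ((t - z.re : ℝ) : ℂ) := by simp [Complex.ext_iff]
        rw [this, Complex.norm_real, Real.norm_eq_abs]
        calc |t - z.re| ≤ |w.re - z.re| := htb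
          _ ≤ ‖w - z‖ := hre
          _ < δ/2 := hwd
          _ < δ := by linarith
      exact le_of_lt (by simpa [Complex.dist_eq] using hδ hdist)
    have h2 : ‖∫ s : ℝ in z.im..w.im, (H (w.re + s*I) - H z)‖ ≤ (c/2) * |w.im - z.im| := by
      apply intervalIntegral.norm_integral_le_of_norm_le_const
      intro s hs
      have hsb : |s - z.im| ≤ |w.im - z.im| := by
        rcases Set.mem_uIoc.1 hs with ⟨h1, h2⟩ | ⟨h1, h2⟩ <;>
          · rw [abs_le]
            constructor <;> cases abs_cases (w.im - z.im) <;> linarith [abs_nonneg (w.im - z.im)]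
      have hdist : dist ((w.re:ℂ) + (s:ℝ)*I) z < δ := by
        rw [Complex.dist_eq]
        have hle := Complex.norm_le_abs_re_add_abs_im (((w.re:ℂ) + (s:ℝ)*I) - z)
        have hr : (((w.re:ℂ) + (s:ℝ)*I) - z).re = w.re - z.re := by simp
        have hi : (((w.re:ℂ) + (s:ℝ)*I) - z).im = s - z.im := by simp
        rw [hr, hi] at hle
        calc ‖((w.re:ℂ) + (s:ℝ)*I) - z‖ ≤ |w.re - z.re| + |s - z.im| := hle
          _ ≤ ‖w - z‖ + |w.im - z.im| := by linarith
          _ ≤ ‖w - z‖ + ‖w - z‖ := by linarith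
          _ < δ := by linarith
      exact le_of_lt (by simpa [Complex.dist_eq] using hδ hdist)
    calc ‖(∫ t : ℝ in z.re..w.re, (H (t + (z.im:ℝ)*I) - H z)) +
            I • ∫ s : ℝ in z.im..w.im, (H (w.re + s*I) - H z)‖
        ≤ ‖∫ t : ℝ in z.re..w.re, (H (t + (z.im:ℝ)*I) - H z)‖ +
            ‖I • ∫ s : ℝ in z.im..w.im, (H (w.re + s*I) - H z)‖ := norm_add_le _ _
      _ = ‖∫ t : ℝ in z.re..w.re, (H (t + (z.im:ℝ)*I) - H z)‖ +
            ‖∫ s : ℝ in z.im..w.im, (H (w.re + s*I) - H z)‖ := by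
          rw [norm_smul]; simp
      _ ≤ (c/2) * |w.re - z.re| + (c/2) * |w.im - z.im| := add_le_add h1 h2
      _ ≤ (c/2) * ‖w - z‖ + (c/2) * ‖w - z‖ := by
          have := half_pos hc
          gcongr
      _ = c * ‖w - z‖ := by ring
  have hGdiff : Differentiable ℂ G := fun z => (hG z).differentiableAt
  have hderiv : deriv G = H := funext fun z => (hG z).deriv
  rw [← hderiv]
  intro z
  exact ((hGdiff.differentiableOn.analyticOnNhd isOpen_univ).deriv z (Set.mem_univ z)).differentiableAt

/-- (Complex-analytic core of Unruh–Wald's argument, used in the paper's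
Theorem 2.) If `f : ℂ → ℂ` is continuous on the closed lower half-plane, holomorphic on the
open lower half-plane, and vanishes on the positive real axis, then `f` vanishes on the whole
closed lower half-plane; in particular it vanishes at every real number. -/
theorem lower_halfplane_holomorphic_vanishing_on_positive_reals
    (f : ℂ → ℂ)
    (hc : ContinuousOn f {z : ℂ | z.im ≤ 0})
    (hd : DifferentiableOn ℂ f {z : ℂ | z.im < 0})
    (hv : ∀ t : ℝ, 0 < t → f (t : ℂ) = 0) :
    (∀ z : ℂ, z.im ≤ 0 → f z = 0) ∧ (∀ t : ℝ, f (t : ℂ) = 0) := by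
  classical
  have hSopen : IsOpen {z : ℂ | z.im < 0} := isOpen_lt Complex.continuous_im continuous_const
  have hCclosed_mem : ∀ z : ℂ, z.im < 0 → {w : ℂ | w.im ≤ 0} ∈ nhds z := fun z hz =>
    Filter.mem_of_superset (hSopen.mem_nhds hz) (fun w hw => (le_of_lt hw : w.im ≤ 0))
  set φ : ℂ → ℂ := fun z => (starRingEnd ℂ) (f (-((starRingEnd ℂ) z))) with hφdef
  have hmim : ∀ z : ℂ, (-((starRingEnd ℂ) z)).im = z.im := fun z => by simp
  have hφc : ContinuousOn φ {z : ℂ | z.im ≤ 0} := by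
    apply Complex.continuous_conj.comp_continuousOn
    apply hc.comp ((Complex.continuous_conj.neg).continuousOn)
    intro z hz
    simpa [hmim z] using hz
  have hφd : ∀ z : ℂ, z.im < 0 → DifferentiableAt ℂ φ z := by
    intro z hz
    have h1 : DifferentiableAt ℂ f (-((starRingEnd ℂ) z)) := by
      apply hd.differentiableAt
      apply hSopen.mem_nhds
      simpa [hmim z] using hz
    have h2 : DifferentiableAt ℂ (fun w => f (-w)) ((starRingEnd ℂ) z) :=
      DifferentiableAt.comp _ h1 (differentiable_id.neg _)
    exact diffAt_conj_conj (f := fun w => f (-w)) h2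
  set h : ℂ → ℂ := fun z => f z * φ z with hhdef
  have hhc : ContinuousOn h {z : ℂ | z.im ≤ 0} := hc.mul hφc
  have hhd : ∀ z : ℂ, z.im < 0 → DifferentiableAt ℂ h z := fun z hz =>
    (hd.differentiableAt (hSopen.mem_nhds hz)).mul (hφd z hz)
  have hpos : ∀ t : ℝ, 0 < t → h (t : ℂ) = 0 := fun t ht => by
    simp [hhdef, hv t ht]
  have hneg : ∀ t : ℝ, t < 0 → h (t : ℂ) = 0 := by
    intro t ht
    have : φ (t : ℂ) = 0 := by
      have h1 : -((starRingEnd ℂ) (t : ℂ)) = ((-t : ℝ) : ℂ) := by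
        simp [Complex.conj_ofReal]
      have hv2 : f (-(t:ℂ)) = 0 := by
        have := hv (-t) (by linarith)
        rwa [Complex.ofReal_neg] at this
      simp [hφdef, h1, hv2]
    simp [hhdef, this]
  have hseq : Filter.Tendsto (fun n : ℕ => ((1/(n+1) : ℝ) : ℂ)) Filter.atTop (nhds 0) := by
    have h1 : Filter.Tendsto (fun n : ℕ => (1/(n+1) : ℝ)) Filter.atTop (nhds 0) :=
      tendsto_one_div_add_atTop_nhds_zero_nat
    have h2 := (Complex.continuous_ofReal.tendsto 0).comp h1
    simpa [Function.comp_def] using h2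
  have hzero : h 0 = 0 := by
    have hseq' : Filter.Tendsto (fun n : ℕ => ((1/(n+1) : ℝ) : ℂ)) Filter.atTop
        (nhdsWithin 0 {z : ℂ | z.im ≤ 0}) := by
      rw [tendsto_nhdsWithin_iff]
      exact ⟨hseq, Filter.Eventually.of_forall fun n => by simp [Complex.ofReal_im]⟩
    have h1 : Filter.Tendsto (fun n : ℕ => h ((1/(n+1) : ℝ) : ℂ)) Filter.atTop (nhds (h 0)) :=
      ((hhc 0 (by simp)).tendsto).comp hseq'
    have h2 : (fun n : ℕ => h ((1/(n+1) : ℝ) : ℂ)) = fun _ => (0:ℂ) := by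
      funext n
      exact hpos _ (by positivity)
    rw [h2] at h1
    exact tendsto_nhds_unique h1 tendsto_const_nhds
  have hreal : ∀ t : ℝ, h (t : ℂ) = 0 := by
    intro t
    rcases lt_trichotomy t 0 with ht | ht | ht
    · exact hneg t ht
    · rw [ht]; exact_mod_cast hzero
    · exact hpos t ht
  have hreal' : ∀ z : ℂ, z.im = 0 → h z = 0 := by
    intro z hz
    have : ((z.re : ℝ) : ℂ) = z := Complex.ext (by simp) (by simp [hz])
    rw [← this]; exact hreal z.re
  set H : ℂ → ℂ := fun z => if z.im ≤ 0 then h z else (starRingEnd ℂ) (h ((starRingEnd ℂ) z))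
    with hHdef
  have hHh : ∀ z : ℂ, z.im ≤ 0 → H z = h z := fun z hz => if_pos hz
  have hHcont : Continuous H := by
    rw [continuous_iff_continuousAt]
    intro z
    rcases lt_trichotomy z.im 0 with hz | hz | hz
    · have h1 : ContinuousAt h z := hhc.continuousAt (hCclosed_mem z hz)
      apply h1.congr
      filter_upwards [hSopen.mem_nhds hz] with w hw
      exact (hHh w (le_of_lt hw)).symm
    · -- boundary: epsilon-delta
      have hHz : H z = 0 := by rw [hHh z hz.le]; exact hreal' z hz
      rw [Metric.continuousAt_iff]
      intro ε hε
      obtain ⟨δ, hδpos, hδ⟩ := Metric.continuousWithinAt_iff.1 (hhc z (by simp [hz.le])) ε hε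
      refine ⟨δ, hδpos, fun u hu => ?_⟩
      rw [hHz]
      by_cases him : u.im ≤ 0
      · rw [hHh u him]
        have := hδ (show u ∈ {w : ℂ | w.im ≤ 0} from him) hu
        simpa [hreal' z hz] using this
      · have hcu : ((starRingEnd ℂ) u).im ≤ 0 := by
          simp only [Complex.conj_im]
          linarith [not_le.1 him]
        have hdu : dist ((starRingEnd ℂ) u) z < δ := by
          have hzz : (starRingEnd ℂ) z = z := Complex.conj_eq_iff_im.2 hz
          calc dist ((starRingEnd ℂ) u) z = dist ((starRingEnd ℂ) u) ((starRingEnd ℂ) z) := by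
                rw [hzz]
            _ = dist u z := Complex.dist_conj_conj u z
            _ < δ := hu
        have h1 := hδ (show (starRingEnd ℂ) u ∈ {w : ℂ | w.im ≤ 0} from hcu) hdu
        rw [hreal' z hz] at h1
        have hHu : H u = (starRingEnd ℂ) (h ((starRingEnd ℂ) u)) := if_neg him
        rw [hHu]
        calc dist ((starRingEnd ℂ) (h ((starRingEnd ℂ) u))) 0
            = ‖(starRingEnd ℂ) (h ((starRingEnd ℂ) u))‖ := by simp [dist_eq_norm]
          _ = ‖h ((starRingEnd ℂ) u)‖ := by rw [RCLike.norm_conj]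
          _ = dist (h ((starRingEnd ℂ) u)) 0 := by simp [dist_eq_norm]
          _ < ε := h1
    · -- upper half: conj of h of conj
      have hzc : ((starRingEnd ℂ) z).im < 0 := by simp [hz]
      have h1 : ContinuousAt (fun w => (starRingEnd ℂ) (h ((starRingEnd ℂ) w))) z := by
        apply Complex.continuous_conj.continuousAt.comp
        exact (hhc.continuousAt (hCclosed_mem _ hzc)).comp Complex.continuous_conj.continuousAt
      apply h1.congr
      have hopen : IsOpen {w : ℂ | 0 < w.im} := isOpen_lt continuous_const Complex.continuous_im
      filter_upwards [hopen.mem_nhds hz] with w hw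
      exact (if_neg (not_le.2 hw)).symm
  have hHdiff : ∀ z : ℂ, z.im ≠ 0 → DifferentiableAt ℂ H z := by
    intro z hz
    rcases lt_or_gt_of_ne hz with hz | hz
    · apply (hhd z hz).congr_of_eventuallyEq
      filter_upwards [hSopen.mem_nhds hz] with w hw
      exact hHh w (le_of_lt hw)
    · have hzc : ((starRingEnd ℂ) z).im < 0 := by simp [hz]
      have h1 : DifferentiableAt ℂ (fun w => (starRingEnd ℂ) (h ((starRingEnd ℂ) w))) z :=
        diffAt_conj_conj (hhd _ hzc)
      apply h1.congr_of_eventuallyEq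
      have hopen : IsOpen {w : ℂ | 0 < w.im} := isOpen_lt continuous_const Complex.continuous_im
      filter_upwards [hopen.mem_nhds hz] with w hw
      exact if_neg (not_le.2 hw)
  have hHentire : Differentiable ℂ H := entire_of_diff_off_real hHcont hHdiff
  have hHan : AnalyticOnNhd ℂ H Set.univ :=
    hHentire.differentiableOn.analyticOnNhd isOpen_univ
  have hfreq : ∃ᶠ w in nhdsWithin (0:ℂ) {(0:ℂ)}ᶜ, H w = 0 := by
    have hseq' : Filter.Tendsto (fun n : ℕ => ((1/(n+1) : ℝ) : ℂ)) Filter.atTop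
        (nhdsWithin 0 {(0:ℂ)}ᶜ) := by
      rw [tendsto_nhdsWithin_iff]
      refine ⟨hseq, Filter.Eventually.of_forall fun n => ?_⟩
      simp only [Set.mem_compl_iff, Set.mem_singleton_iff]
      intro hcontra
      have : (1/(n+1) : ℝ) = 0 := by exact_mod_cast hcontra
      have : (0:ℝ) < 1/(n+1) := by positivity
      linarith
    apply hseq'.frequently
    apply Filter.Eventually.frequently
    apply Filter.Eventually.of_forall
    intro n
    rw [hHh _ (by simp [Complex.ofReal_im])]
    exact hreal _
  have hH0 : Set.EqOn H 0 Set.univ :=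
    hHan.eqOn_zero_of_preconnected_of_frequently_eq_zero isPreconnected_univ (Set.mem_univ 0) hfreq
  have hh0 : ∀ z : ℂ, z.im ≤ 0 → h z = 0 := by
    intro z hz
    rw [← hHh z hz]
    exact hH0 (Set.mem_univ z)
  -- now conclude f = 0 on the open lower half-plane
  have hfS : ∀ z : ℂ, z.im < 0 → f z = 0 := by
    by_contra hcon
    push_neg at hcon
    obtain ⟨z₁, hz₁S, hz₁⟩ := hcon
    have hφdOn : DifferentiableOn ℂ φ {z : ℂ | z.im < 0} := fun z hz =>
      (hφd z hz).differentiableWithinAt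
    have hφan : AnalyticOnNhd ℂ φ {z : ℂ | z.im < 0} := hφdOn.analyticOnNhd hSopen
    have hfc : ContinuousAt f z₁ := (hd.differentiableAt (hSopen.mem_nhds hz₁S)).continuousAt
    have hfne : ∀ᶠ w in nhds z₁, f w ≠ 0 := hfc.eventually_ne hz₁
    have hφ0 : ∀ᶠ w in nhds z₁, φ w = 0 := by
      filter_upwards [hfne, hSopen.mem_nhds hz₁S] with w hw1 hw2
      have := hh0 w (le_of_lt hw2)
      rw [hhdef] at this
      exact (mul_eq_zero.1 this).resolve_left hw1
    have hfreqφ : ∃ᶠ w in nhdsWithin z₁ {z₁}ᶜ, φ w = 0 :=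
      ((hφ0.filter_mono nhdsWithin_le_nhds).frequently)
    have hφall : Set.EqOn φ 0 {z : ℂ | z.im < 0} :=
      hφan.eqOn_zero_of_preconnected_of_frequently_eq_zero
        ((convex_halfSpace_im_lt 0).isPreconnected) hz₁S hfreqφ
    have hw1 : (-((starRingEnd ℂ) z₁)).im < 0 := by simpa [hmim] using hz₁S
    have := hφall hw1
    simp only [hφdef, Pi.zero_apply] at this
    rw [show -((starRingEnd ℂ) (-((starRingEnd ℂ) z₁))) = z₁ by simp] at this
    exact hz₁ (by simpa using congrArg (starRingEnd ℂ) this)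
  have hfin : ∀ z : ℂ, z.im ≤ 0 → f z = 0 := by
    intro z hz
    rcases lt_or_eq_of_le hz with hz' | hz'
    · exact hfS z hz'
    · -- boundary point: limit from below
      have him : ∀ r : ℝ, (z - (r:ℂ) * Complex.I).im = z.im - r := fun r => by simp
      have hseq2 : Filter.Tendsto (fun n : ℕ => z - ((1/(n+1) : ℝ) : ℂ) * Complex.I)
          Filter.atTop (nhdsWithin z {w : ℂ | w.im ≤ 0}) := by
        rw [tendsto_nhdsWithin_iff]
        constructor
        · have : Filter.Tendsto (fun n : ℕ => z - ((1/(n+1) : ℝ) : ℂ) * Complex.I)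
              Filter.atTop (nhds (z - (0:ℂ) * Complex.I)) := by
            apply Filter.Tendsto.sub tendsto_const_nhds
            exact hseq.mul_const Complex.I
          simpa using this
        · apply Filter.Eventually.of_forall
          intro n
          have : (0:ℝ) < 1/(n+1) := by positivity
          simp only [Set.mem_setOf_eq, him (1/(n+1))]
          linarith
      have h1 : Filter.Tendsto (fun n : ℕ => f (z - ((1/(n+1) : ℝ) : ℂ) * Complex.I))
          Filter.atTop (nhds (f z)) := ((hc z hz).tendsto).comp hseq2
      have h2 : (fun n : ℕ => f (z - ((1/(n+1) : ℝ) : ℂ) * Complex.I)) = fun _ => (0:ℂ) := by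
        funext n
        apply hfS
        have hn : (0:ℝ) < 1/(n+1) := by positivity
        rw [him (1/(n+1)), hz']
        linarith
      rw [h2] at h1
      exact tendsto_nhds_unique h1 tendsto_const_nhds
  exact ⟨hfin, fun t => hfin t (by simp)⟩
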